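/- Let θ be an alternating (k+1)-multilinear form on a vector space V vanishing on a subspace E. For a hyperplane H ⊂ E (cut out by ξ ∈ E*, ξ ≠ 0) and a vector v ∈ V, the subspace H + span{v} is annihilated by θ if and only if ξ ∧ (v ⌟ θ) restricted to E vanishes, assuming θ already vanishes when all arguments are in E. -/

import Mathlib

open Finset

theorem aux_cons_removeNth {V : Type*} [AddCommGroup V] [Module ℝ V] {k : ℕ}
    (θ : V [⋀^Fin (k + 1)]→ₗ[ℝ] ℝ) (u : Fin (k + 1) → V) (j : Fin (k + 1)) :
    θ u = (-1 : ℝ) ^ (j : ℕ) * θ (Fin.cons (u j) (j.removeNth u)) := by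
  have hcomp : u = (Fin.cons (u j) (j.removeNth u)) ∘ j.cycleRange := by
    funext i
    rcases eq_or_ne i j with rfl | hij
    · simp [Fin.cycleRange_self]
    · obtain ⟨m, rfl⟩ := Fin.exists_succAbove_eq hij
      simp [Fin.cycleRange_succAbove, Fin.removeNth]
  calc θ u = θ ((Fin.cons (u j) (j.removeNth u)) ∘ j.cycleRange) := by rw [← hcomp]
    _ = Equiv.Perm.sign (j.cycleRange) • θ (Fin.cons (u j) (j.removeNth u)) :=
        AlternatingMap.map_perm _ _ _
    _ = (-1 : ℝ) ^ (j : ℕ) * θ (Fin.cons (u j) (j.removeNth u)) := by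
        rw [Fin.sign_cycleRange, Units.smul_def]
        push_cast
        rw [zsmul_eq_mul]
        push_cast
        ring

/-- Let `θ` be an alternating `(k+1)`-form on `V` vanishing on a subspace `E`.
For a hyperplane `H = ker ξ ∩ E` of `E` (with `ξ ∈ E*` nonzero) and a vector
`v ∈ V`, the subspace `H + span{v}` is annihilated by `θ` if and only if
`ξ ∧ (v ⌟ θ)` restricted to `E` vanishes, i.e. for all `e₁,…,e_{k+1} ∈ E`,
`Σⱼ (−1)^{j+1} ξ(eⱼ) θ(v, e₁,…,êⱼ,…,e_{k+1}) = 0`. -/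
theorem hyperplane_extension_iff_symbol {V : Type*} [AddCommGroup V]
    [Module ℝ V] (k : ℕ) (θ : V [⋀^Fin (k + 1)]→ₗ[ℝ] ℝ)
    (E : Submodule ℝ V)
    (hθE : ∀ e : Fin (k + 1) → V, (∀ i, e i ∈ E) → θ e = 0)
    (ξ : Module.Dual ℝ E) (hξ : ξ ≠ 0) (v : V) :
    (∀ u : Fin (k + 1) → V,
        (∀ i, u i ∈ (LinearMap.ker ξ).map E.subtype ⊔ Submodule.span ℝ {v}) →
        θ u = 0)
      ↔
    (∀ e : Fin (k + 1) → E,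
        ∑ j : Fin (k + 1), (-1 : ℝ) ^ ((j : ℕ) + 1) * ξ (e j) *
          θ (Fin.cons v (j.removeNth fun i => (e i : V))) = 0) := by
  set H' : Submodule ℝ V := (LinearMap.ker ξ).map E.subtype with hH'
  obtain ⟨x, hx⟩ : ∃ x : E, ξ x ≠ 0 := by
    by_contra h; push_neg at h; exact hξ (by ext y; simp [h y])
  set e₀ : E := (ξ x)⁻¹ • x with he₀def
  have hξe₀ : ξ e₀ = 1 := by simp [he₀def, inv_mul_cancel₀ hx]
  have hH'E : ∀ {w : V}, w ∈ H' → w ∈ E := by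
    rintro w ⟨y, -, rfl⟩; exact y.2
  have hmemH' : ∀ (y : E), ξ y = 0 → (y : V) ∈ H' := fun y hy =>
    ⟨y, LinearMap.mem_ker.mpr hy, rfl⟩
  -- the key consequence of the intermediate predicate P
  have key : (∀ h : Fin k → V, (∀ i, h i ∈ H') → θ (Fin.cons v h) = 0) →
      ∀ (a : Fin (k + 1) → V) (j : Fin (k + 1)), a j = v →
        (∀ i, i ≠ j → a i ∈ H') → θ a = 0 := by
    intro hp a j hj ha
    rw [aux_cons_removeNth θ a j, hj,
      hp (j.removeNth a) (fun i => ha _ (Fin.succAbove_ne j i)), mul_zero]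
  -- P implies the RHS
  have hPR : (∀ h : Fin k → V, (∀ i, h i ∈ H') → θ (Fin.cons v h) = 0) →
      ∀ e : Fin (k + 1) → E,
        ∑ j : Fin (k + 1), (-1 : ℝ) ^ ((j : ℕ) + 1) * ξ (e j) *
          θ (Fin.cons v (j.removeNth fun i => (e i : V))) = 0 := by
    intro hp e
    set c : Fin (k + 1) → ℝ := fun i => ξ (e i) with hc
    set h : Fin (k + 1) → E := fun i => e i - c i • e₀ with hhdef
    have hhker : ∀ i, ξ (h i) = 0 := by
      intro i; simp [hhdef, hc, hξe₀]
    have hhH' : ∀ i, ((h i : V)) ∈ H' := fun i => hmemH' _ (hhker i)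
    set e' : Fin (k + 1) → V := fun l => (e l : V) with he'
    set a : Fin (k + 1) → (Fin (k + 1) → V) :=
      fun j => Function.update (fun l => ((h l : V))) j v with hadef
    set D : Fin (k + 1) → Fin (k + 1) → (Fin (k + 1) → V) :=
      fun j i => Function.update (a j) i (e₀ : V) with hDdef
    -- Step A : move v to the front
    have stepA : ∀ j : Fin (k + 1),
        θ (Fin.cons v (j.removeNth e')) = (-1 : ℝ) ^ (j : ℕ) *
          θ (Function.update e' j v) := by
      intro j
      have hsq : (-1 : ℝ) ^ (j : ℕ) * (-1 : ℝ) ^ (j : ℕ) = 1 := by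
        rw [← pow_add]; exact Even.neg_one_pow ⟨(j : ℕ), rfl⟩
      have h2 : Fin.cons (Function.update e' j v j)
          (j.removeNth (Function.update e' j v)) = (Fin.cons v (j.removeNth e') : Fin (k+1) → V) := by
        funext i
        refine Fin.cases ?_ (fun m => ?_) i
        · simp
        · simp only [Fin.cons_succ]
          exact Function.update_of_ne (Fin.succAbove_ne j m) v e'
      have h1 := aux_cons_removeNth θ (Function.update e' j v) j
      rw [h2] at h1
      rw [h1, ← mul_assoc, hsq, one_mul]
    -- Step B : expand update e' j v
    have stepB : ∀ j : Fin (k + 1),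
        θ (Function.update e' j v) =
          ∑ i ∈ Finset.univ.erase j, c i * θ (D j i) := by
      intro j
      set b : Fin (k + 1) → V :=
        Function.update (fun l => c l • (e₀ : V)) j 0 with hbdef
      have hsplit : Function.update e' j v = b + a j := by
        funext i
        rcases eq_or_ne i j with rfl | hij
        · simp [hbdef, hadef]
        · simp only [Pi.add_apply, hbdef, hadef, Function.update_of_ne hij, he', hhdef]
          push_cast
          abel
      rw [hsplit]
      rw [show θ (b + a j) = θ.toMultilinearMap (b + a j) from rfl,
        MultilinearMap.map_add_univ]
      have hinj : ∀ p ∈ Finset.univ.erase j, ∀ q ∈ Finset.univ.erase j,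
          ({p} : Finset (Fin (k + 1))) = {q} → p = q :=
        fun p _ q _ hpq => Finset.singleton_injective hpq
      have himg : ∑ s ∈ (Finset.univ.erase j).image
            (fun i => ({i} : Finset (Fin (k + 1)))),
          θ.toMultilinearMap (s.piecewise b (a j))
          = ∑ i ∈ Finset.univ.erase j, c i * θ (D j i) := by
        rw [Finset.sum_image hinj]
        refine Finset.sum_congr rfl fun i hi => ?_
        have hij : i ≠ j := Finset.ne_of_mem_erase hi
        have hpe : ({i} : Finset (Fin (k + 1))).piecewise b (a j) =
            Function.update (a j) i (c i • (e₀ : V)) := by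
          rw [Finset.piecewise_singleton, hbdef, Function.update_of_ne hij]
        rw [hpe, θ.toMultilinearMap.map_update_smul (a j) i (c i) (e₀ : V), smul_eq_mul]
        rfl
      rw [← himg]
      refine (Finset.sum_subset (Finset.subset_univ _) ?_).symm
      intro s _ hs
      by_cases hjs : j ∈ s
      · refine θ.toMultilinearMap.map_coord_zero j ?_
        rw [s.piecewise_eq_of_mem _ _ hjs, hbdef, Function.update_self]
      · have hpe : s.piecewise b (a j) =
            s.piecewise (fun i => c i • (s.piecewise (fun _ => (e₀ : V)) (a j)) i)
              (s.piecewise (fun _ => (e₀ : V)) (a j)) := by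
          funext i
          by_cases hi : i ∈ s
          · have hij : i ≠ j := fun hcon => hjs (hcon ▸ hi)
            rw [s.piecewise_eq_of_mem _ _ hi, s.piecewise_eq_of_mem _ _ hi,
              s.piecewise_eq_of_mem _ _ hi, hbdef, Function.update_of_ne hij]
          · rw [s.piecewise_eq_of_notMem _ _ hi, s.piecewise_eq_of_notMem _ _ hi,
              s.piecewise_eq_of_notMem _ _ hi]
        rw [hpe, MultilinearMap.map_piecewise_smul]
        by_cases hs2 : 1 < s.card
        · obtain ⟨p, hp', q, hq, hpq⟩ := Finset.one_lt_card.mp hs2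
          have hz : θ (s.piecewise (fun _ => (e₀ : V)) (a j)) = 0 :=
            θ.map_eq_zero_of_eq _
              (by rw [s.piecewise_eq_of_mem _ _ hp', s.piecewise_eq_of_mem _ _ hq]) hpq
          rw [show θ.toMultilinearMap (s.piecewise (fun _ => (e₀ : V)) (a j)) =
            θ (s.piecewise (fun _ => (e₀ : V)) (a j)) from rfl, hz, smul_zero]
        · push_neg at hs2
          rcases s.eq_empty_or_nonempty with rfl | ⟨p, hp'⟩
          · have hz : θ (a j) = 0 := by
              refine key hp (a j) j ?_ fun i hij => ?_
              · rw [hadef]; simp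
              · simp only [hadef, Function.update_of_ne hij]; exact hhH' i
            simp only [Finset.piecewise_empty]
            rw [show θ.toMultilinearMap (a j) = θ (a j) from rfl, hz, smul_zero]
          · exfalso
            have hsing : s = {p} :=
              Finset.eq_singleton_iff_unique_mem.mpr
                ⟨hp', fun q hq => Finset.card_le_one.mp hs2 q hq p hp'⟩
            refine hs ?_
            rw [hsing]
            refine Finset.mem_image.mpr ⟨p, Finset.mem_erase.mpr ⟨?_, Finset.mem_univ p⟩, rfl⟩
            intro hcon
            exact hjs (by rw [hsing, hcon]; exact Finset.mem_singleton_self j)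
    -- Step C : antisymmetric cancellation
    set F : Fin (k + 1) → Fin (k + 1) → ℝ :=
      fun j i => if i = j then 0 else c j * c i * θ (D j i) with hF
    have hanti : ∀ j i, F j i = -F i j := by
      intro j i
      rcases eq_or_ne i j with rfl | hij
      · simp [hF]
      · rw [hF]
        simp only [if_neg hij, if_neg (Ne.symm hij)]
        have hswap : D i j = D j i ∘ Equiv.swap i j := by
          funext l
          simp only [hDdef, hadef, Function.comp_apply]
          by_cases hli : l = i
          · subst hli
            rw [Equiv.swap_apply_left, Function.update_of_ne hij, Function.update_self,
              Function.update_of_ne (Ne.symm hij), Function.update_self]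
          · by_cases hlj : l = j
            · subst hlj
              rw [Equiv.swap_apply_right, Function.update_self, Function.update_self]
            · rw [Equiv.swap_apply_of_ne_of_ne hli hlj, Function.update_of_ne hlj,
                Function.update_of_ne hli, Function.update_of_ne hli,
                Function.update_of_ne hlj]
        rw [hswap, θ.map_swap _ hij]
        ring
    have hT : ∑ j : Fin (k + 1), ∑ i : Fin (k + 1), F j i = 0 := by
      have h1 : ∑ j : Fin (k + 1), ∑ i : Fin (k + 1), F j i
          = ∑ j : Fin (k + 1), ∑ i : Fin (k + 1), F i j := Finset.sum_comm
      have h2 : ∑ j : Fin (k + 1), ∑ i : Fin (k + 1), F i j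
          = -∑ j : Fin (k + 1), ∑ i : Fin (k + 1), F j i := by
        rw [← Finset.sum_neg_distrib]
        refine Finset.sum_congr rfl fun j _ => ?_
        rw [← Finset.sum_neg_distrib]
        exact Finset.sum_congr rfl fun i _ => by rw [hanti i j]
      linarith [h1.trans h2]
    -- assemble
    calc ∑ j : Fin (k + 1), (-1 : ℝ) ^ ((j : ℕ) + 1) * ξ (e j) *
          θ (Fin.cons v (j.removeNth fun i => (e i : V)))
        = ∑ j : Fin (k + 1), -∑ i : Fin (k + 1), F j i := by
          refine Finset.sum_congr rfl fun j _ => ?_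
          have hs1 : (-1 : ℝ) ^ ((j : ℕ) + 1) * (-1 : ℝ) ^ (j : ℕ) = -1 := by
            rw [← pow_add, show (j : ℕ) + 1 + (j : ℕ) = 2 * (j : ℕ) + 1 by ring,
              pow_succ, pow_mul]
            norm_num
          rw [show (j.removeNth fun i => ((e i : V))) = j.removeNth e' from rfl,
            stepA j, stepB j,
            ← Finset.sum_erase (Finset.univ) (f := F j) (show F j j = 0 from if_pos rfl),
            ← Finset.sum_neg_distrib, Finset.mul_sum, Finset.mul_sum]
          refine Finset.sum_congr rfl fun i hi => ?_
          rw [hF]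
          simp only [if_neg (Finset.ne_of_mem_erase hi)]
          show (-1 : ℝ) ^ ((j : ℕ) + 1) * c j * ((-1 : ℝ) ^ (j : ℕ) * (c i * θ (D j i)))
            = -(c j * c i * θ (D j i))
          linear_combination (c j * c i * θ (D j i)) * hs1
      _ = -∑ j : Fin (k + 1), ∑ i : Fin (k + 1), F j i := Finset.sum_neg_distrib _
      _ = 0 := by rw [hT, neg_zero]
  constructor
  · -- LHS → RHS
    intro hL
    refine hPR (fun h hh => hL _ fun i => ?_)
    refine Fin.cases ?_ ?_ i
    · rw [Fin.cons_zero]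
      exact Submodule.mem_sup_right (Submodule.mem_span_singleton_self v)
    · intro m; rw [Fin.cons_succ]; exact Submodule.mem_sup_left (hh m)
  · -- RHS → LHS
    intro hR
    -- first derive P from the RHS
    have hp : ∀ h : Fin k → V, (∀ i, h i ∈ H') → θ (Fin.cons v h) = 0 := by
      intro h hh
      choose g hg0 hg using fun i => Submodule.mem_map.mp (hh i)
      have hg0' : ∀ i, ξ (g i) = 0 := fun i => LinearMap.mem_ker.mp (hg0 i)
      have h0 := hR (Fin.cons e₀ g)
      have harg : (fun i => (((Fin.cons e₀ g : Fin (k + 1) → E) i : E) : V)) =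
          (Fin.cons ((e₀ : V)) (fun i => ((g i : V))) : Fin (k + 1) → V) := by
        funext i; refine Fin.cases ?_ (fun m => ?_) i <;> simp
      have hgh : (fun i => ((g i : V))) = h := funext hg
      rw [Fin.sum_univ_succ, harg] at h0
      simp only [Fin.cons_zero, Fin.cons_succ, hξe₀, hg0', mul_zero, zero_mul,
        Finset.sum_const_zero, add_zero, Fin.removeNth_zero, Fin.tail_cons, hgh,
        Fin.val_zero, zero_add, pow_one, mul_one, neg_one_mul, neg_eq_zero] at h0
      exact h0
    -- now P implies the LHS
    intro u hu
    choose y hy z hz hyz using fun i => Submodule.mem_sup.mp (hu i)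
    choose t ht using fun i => Submodule.mem_span_singleton.mp (hz i)
    have hu' : u = (fun i => t i • v) + y := by
      funext i
      simp only [Pi.add_apply]
      rw [← hyz i, ← ht i]
      exact (add_comm _ _)
    rw [hu', show θ ((fun i => t i • v) + y) =
      θ.toMultilinearMap ((fun i => t i • v) + y) from rfl, MultilinearMap.map_add_univ]
    refine Finset.sum_eq_zero fun s _ => ?_
    have hpe : s.piecewise (fun i => t i • v) y =
        s.piecewise (fun i => t i • (s.piecewise (fun _ => v) y) i)
          (s.piecewise (fun _ => v) y) := by
      funext i
      by_cases hi : i ∈ s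
      · rw [s.piecewise_eq_of_mem _ _ hi, s.piecewise_eq_of_mem _ _ hi,
          s.piecewise_eq_of_mem _ _ hi]
      · rw [s.piecewise_eq_of_notMem _ _ hi, s.piecewise_eq_of_notMem _ _ hi,
          s.piecewise_eq_of_notMem _ _ hi]
    rw [hpe, MultilinearMap.map_piecewise_smul]
    by_cases hs2 : 1 < s.card
    · obtain ⟨p, hp', q, hq, hpq⟩ := Finset.one_lt_card.mp hs2
      have hz' : θ (s.piecewise (fun _ => v) y) = 0 :=
        θ.map_eq_zero_of_eq _
          (by rw [s.piecewise_eq_of_mem _ _ hp', s.piecewise_eq_of_mem _ _ hq]) hpq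
      rw [show θ.toMultilinearMap (s.piecewise (fun _ => v) y) =
        θ (s.piecewise (fun _ => v) y) from rfl, hz', smul_zero]
    · push_neg at hs2
      rcases s.eq_empty_or_nonempty with rfl | ⟨p, hp'⟩
      · simp only [Finset.piecewise_empty]
        rw [show θ.toMultilinearMap y = θ y from rfl,
          hθE y (fun i => hH'E (hy i)), smul_zero]
      · have hsing : s = {p} :=
          Finset.eq_singleton_iff_unique_mem.mpr
            ⟨hp', fun q hq => Finset.card_le_one.mp hs2 q hq p hp'⟩
        rw [hsing, Finset.piecewise_singleton]
        have hz' : θ (Function.update y p v) = 0 := by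
          refine key hp (Function.update y p v) p (Function.update_self p v y)
            fun i hip => ?_
          rw [Function.update_of_ne hip]
          exact hy i
        rw [show θ.toMultilinearMap (Function.update y p v) =
          θ (Function.update y p v) from rfl, hz', smul_zero]
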